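/- Let p be a nonzero polynomial in n variables with integer coefficients and zero constant term, viewed as a polynomial function on ℂⁿ. Then the variety V(p) ⊆ ℂⁿ is allowable if and only if there exist a nonzero integer m and a nonempty finite list of factors, each equal to x_i, x_i + x_j, or x_i − x_j for some indices i, j, such that p equals m times the product of these factors. -/

import Mathlib

/-- An allowable hyperplane in `Kⁿ` is one of `{x : x i = 0}`, `{x : x i + x j = 0}`,
`{x : x i - x j = 0}`. -/
def IsAllowableHyperplane {K : Type*} [Ring K] {n : ℕ} (H : Set (Fin n → K)) : Prop :=
  (∃ i : Fin n, H = {x | x i = 0}) ∨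
  (∃ i j : Fin n, H = {x | x i + x j = 0}) ∨
  (∃ i j : Fin n, H = {x | x i - x j = 0})

/-- A set is allowable if it is a finite union of finite (nonempty) intersections of
allowable hyperplanes. -/
def IsAllowable {K : Type*} [Ring K] {n : ℕ} (A : Set (Fin n → K)) : Prop :=
  ∃ 𝒢 : Finset (Finset (Set (Fin n → K))),
    (∀ G ∈ 𝒢, G.Nonempty ∧ ∀ H ∈ G, IsAllowableHyperplane H) ∧
    A = ⋃ G ∈ 𝒢, ⋂₀ (G : Set (Set (Fin n → K)))

/-- A basic factor is `x i`, `x i + x j`, or `x i - x j`. -/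
def IsBasicFactor {R : Type*} [CommRing R] {n : ℕ} (q : MvPolynomial (Fin n) R) : Prop :=
  (∃ i : Fin n, q = MvPolynomial.X i) ∨
  (∃ i j : Fin n, q = MvPolynomial.X i + MvPolynomial.X j) ∨
  (∃ i j : Fin n, q = MvPolynomial.X i - MvPolynomial.X j)

section Aux

open MvPolynomial

lemma mv_prime_X {K : Type*} [Field K] {n : ℕ} (i : Fin n) :
    Prime (X i : MvPolynomial (Fin n) K) := by
  cases n with
  | zero => exact i.elim0
  | succ m =>
    let e := (renameEquiv K (Equiv.swap i 0)).trans (finSuccEquiv K m)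
    rw [← MulEquiv.prime_iff e.toMulEquiv]
    have h : e.toMulEquiv (X i) = Polynomial.X := by
      show e (X i) = Polynomial.X
      simp [e, Equiv.swap_apply_left, finSuccEquiv_X_zero]
    rw [h]
    exact Polynomial.prime_X

lemma mv_prime_addsub {K : Type*} [Field K] {n : ℕ} {i j : Fin n} (hij : i ≠ j) :
    Prime (X i + X j : MvPolynomial (Fin n) K) ∧
    Prime (X i - X j : MvPolynomial (Fin n) K) := by
  classical
  let A : MvPolynomial (Fin n) K →ₐ[K] MvPolynomial (Fin n) K :=
    aeval (fun k => if k = i then X i + X j else X k)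
  let B : MvPolynomial (Fin n) K →ₐ[K] MvPolynomial (Fin n) K :=
    aeval (fun k => if k = i then X i - X j else X k)
  have hAB : A.comp B = AlgHom.id K _ := by
    apply algHom_ext
    intro k
    by_cases hk : k = i
    · subst hk
      simp [A, B, if_neg (Ne.symm hij)]
    · simp [A, B, hk]
  have hBA : B.comp A = AlgHom.id K _ := by
    apply algHom_ext
    intro k
    by_cases hk : k = i
    · subst hk
      simp [A, B, if_neg (Ne.symm hij)]
    · simp [A, B, hk]
  let e : MvPolynomial (Fin n) K ≃ₐ[K] MvPolynomial (Fin n) K := AlgEquiv.ofAlgHom A B hAB hBA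
  constructor
  · have h := mv_prime_X (K := K) i
    rw [← MulEquiv.prime_iff e.toMulEquiv] at h
    have : e.toMulEquiv (X i) = X i + X j := by
      show A (X i) = X i + X j
      simp [A]
    rwa [this] at h
  · have h := mv_prime_X (K := K) i
    rw [← MulEquiv.prime_iff e.symm.toMulEquiv] at h
    have : e.symm.toMulEquiv (X i) = X i - X j := by
      show B (X i) = X i - X j
      simp [B]
    rwa [this] at h

lemma mv_isUnit_iff {K : Type*} [Field K] {n : ℕ} {q : MvPolynomial (Fin n) K} :
    IsUnit q ↔ ∃ c : K, c ≠ 0 ∧ q = C c := by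
  constructor
  · intro hq
    induction n with
    | zero =>
      obtain ⟨c, rfl⟩ := C_surjective (Fin 0) q
      refine ⟨c, ?_, rfl⟩
      have := hq.map constantCoeff
      rw [constantCoeff_C] at this
      exact this.ne_zero
    | succ m ih =>
      have h1 : IsUnit ((finSuccEquiv K m) q) := hq.map (finSuccEquiv K m)
      rw [Polynomial.isUnit_iff] at h1
      obtain ⟨r, hr, hrq⟩ := h1
      obtain ⟨c, hc, rfl⟩ := ih hr
      refine ⟨c, hc, ?_⟩
      have hq' : q = (finSuccEquiv K m).symm (Polynomial.C (C c)) := by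
        rw [hrq, AlgEquiv.symm_apply_apply]
      rw [hq']
      have h2 := MvPolynomial.finSuccEquiv_comp_C_eq_C (R := K) m
      calc ((finSuccEquiv K m).symm :
            Polynomial (MvPolynomial (Fin m) K) →+* MvPolynomial (Fin (m+1)) K)
            (Polynomial.C (C c))
          = (((finSuccEquiv K m).symm :
              Polynomial (MvPolynomial (Fin m) K) →+* MvPolynomial (Fin (m+1)) K).comp
              ((Polynomial.C).comp MvPolynomial.C)) c := rfl
        _ = C c := by rw [h2]
  · rintro ⟨c, hc, rfl⟩
    exact (isUnit_iff_ne_zero.mpr hc).map C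

/-- good basic factors: the degenerate sum/difference cases are excluded -/
def GoodBasic {n : ℕ} (q : MvPolynomial (Fin n) ℤ) : Prop :=
  (∃ i : Fin n, q = X i) ∨
  (∃ i j : Fin n, i ≠ j ∧ q = X i + X j) ∨
  (∃ i j : Fin n, i ≠ j ∧ q = X i - X j)

lemma GoodBasic.isBasicFactor {n : ℕ} {q : MvPolynomial (Fin n) ℤ} (h : GoodBasic q) :
    IsBasicFactor q := by
  rcases h with ⟨i, rfl⟩ | ⟨i, j, _, rfl⟩ | ⟨i, j, _, rfl⟩
  · exact Or.inl ⟨i, rfl⟩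
  · exact Or.inr (Or.inl ⟨i, j, rfl⟩)
  · exact Or.inr (Or.inr ⟨i, j, rfl⟩)

lemma GoodBasic.exists_coeff_one {n : ℕ} {q : MvPolynomial (Fin n) ℤ} (h : GoodBasic q) :
    ∃ d, coeff d q = 1 := by
  rcases h with ⟨i, rfl⟩ | ⟨i, j, hij, rfl⟩ | ⟨i, j, hij, rfl⟩
  · exact ⟨Finsupp.single i 1, by simp⟩
  · refine ⟨Finsupp.single i 1, ?_⟩
    rw [coeff_add, coeff_X, coeff_X, if_pos rfl, if_neg, add_zero]
    intro hs
    exact hij (by simpa using ((Finsupp.single_left_injective one_ne_zero) hs).symm)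
  · refine ⟨Finsupp.single i 1, ?_⟩
    rw [coeff_sub, coeff_X, coeff_X, if_pos rfl, if_neg, sub_zero]
    intro hs
    exact hij (by simpa using ((Finsupp.single_left_injective one_ne_zero) hs).symm)

lemma GoodBasic.map_ne_zero {n : ℕ} {q : MvPolynomial (Fin n) ℤ} (h : GoodBasic q)
    {R : Type*} [CommRing R] [Nontrivial R] :
    MvPolynomial.map (Int.castRingHom R) q ≠ 0 := by
  obtain ⟨d, hd⟩ := h.exists_coeff_one
  intro h0
  have := congrArg (coeff d) h0
  rw [coeff_map, hd] at this
  simp at this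

lemma GoodBasic.ne_zero {n : ℕ} {q : MvPolynomial (Fin n) ℤ} (h : GoodBasic q) : q ≠ 0 := by
  obtain ⟨d, hd⟩ := h.exists_coeff_one
  intro h0
  rw [h0] at hd
  simp at hd

lemma GoodBasic.prime_map {n : ℕ} {q : MvPolynomial (Fin n) ℤ} (h : GoodBasic q) :
    Prime (MvPolynomial.map (Int.castRingHom ℂ) q) := by
  rcases h with ⟨i, rfl⟩ | ⟨i, j, hij, rfl⟩ | ⟨i, j, hij, rfl⟩
  · rw [map_X]; exact mv_prime_X i
  · rw [map_add, map_X, map_X]; exact (mv_prime_addsub hij).1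
  · rw [map_sub, map_X, map_X]; exact (mv_prime_addsub hij).2

lemma eq_C_mul_of_dvd_prime {n : ℕ} {q L : MvPolynomial (Fin n) ℂ} (hL : Prime L)
    (hq : ¬IsUnit q) (hdvd : q ∣ L) : ∃ c : ℂ, c ≠ 0 ∧ q = C c * L := by
  obtain ⟨s, hs⟩ := hdvd
  rcases hL.irreducible.isUnit_or_isUnit hs with h | h
  · exact absurd h hq
  · obtain ⟨c, hc, rfl⟩ := mv_isUnit_iff.mp h
    refine ⟨c⁻¹, inv_ne_zero hc, ?_⟩
    rw [hs]
    calc q = (C c⁻¹ * C c) * q := by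
            rw [← C_mul, inv_mul_cancel₀ hc, C_1, one_mul]
      _ = C c⁻¹ * (q * C c) := by ring

lemma factor_structure {n : ℕ} (B : Finset (MvPolynomial (Fin n) ℤ))
    (hB : ∀ b ∈ B, GoodBasic b) (K : ℕ) (g : MvPolynomial (Fin n) ℂ)
    (hg : g ∣ (∏ b ∈ B, MvPolynomial.map (Int.castRingHom ℂ) b) ^ K) :
    ∃ (c : ℂ) (k : ℕ) (f : Fin k → MvPolynomial (Fin n) ℤ), c ≠ 0 ∧ (∀ l, GoodBasic (f l)) ∧
      g = C c * ∏ l, MvPolynomial.map (Int.castRingHom ℂ) (f l) := by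
  have hr : (∏ b ∈ B, MvPolynomial.map (Int.castRingHom ℂ) b) ≠ 0 := by
    rw [Finset.prod_ne_zero_iff]
    exact fun b hb => (hB b hb).map_ne_zero
  revert hg
  refine UniqueFactorizationMonoid.induction_on_prime g ?_ ?_ ?_
  · intro h0
    exact absurd (zero_dvd_iff.mp h0) (pow_ne_zero K hr)
  · intro x hx _
    obtain ⟨c, hc, rfl⟩ := mv_isUnit_iff.mp hx
    exact ⟨c, 0, Fin.elim0, hc, fun l => l.elim0, by simp⟩
  · intro a q ha hq ih hdvd
    have hadvd : a ∣ _ := (dvd_mul_left a q).trans hdvd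
    obtain ⟨c, k, f, hc, hf, rfl⟩ := ih hadvd
    have hqdvd : q ∣ (∏ b ∈ B, MvPolynomial.map (Int.castRingHom ℂ) b) :=
      hq.dvd_of_dvd_pow ((dvd_mul_right q _).trans hdvd)
    obtain ⟨b, hb, hqb⟩ := hq.exists_mem_finset_dvd hqdvd
    obtain ⟨c', hc', hq'⟩ := eq_C_mul_of_dvd_prime (hB b hb).prime_map hq.not_unit hqb
    refine ⟨c' * c, k + 1, Fin.cons b f, mul_ne_zero hc' hc, ?_, ?_⟩
    · intro l
      refine Fin.cases ?_ ?_ l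
      · exact hB b hb
      · exact fun l' => hf l'
    · rw [Fin.prod_univ_succ]
      simp only [Fin.cons_zero, Fin.cons_succ]
      rw [hq', C_mul]
      ring

open scoped Classical in
noncomputable def allGoods (n : ℕ) : Finset (MvPolynomial (Fin n) ℤ) :=
  (Finset.univ.image fun i : Fin n => X i) ∪
  ((Finset.univ.filter fun ij : Fin n × Fin n => ij.1 ≠ ij.2).image fun ij => X ij.1 + X ij.2) ∪
  ((Finset.univ.filter fun ij : Fin n × Fin n => ij.1 ≠ ij.2).image fun ij => X ij.1 - X ij.2)

lemma mem_allGoods {n : ℕ} {b : MvPolynomial (Fin n) ℤ} (hb : b ∈ allGoods n) : GoodBasic b := by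
  classical
  simp only [allGoods, Finset.mem_union, Finset.mem_image, Finset.mem_filter, Finset.mem_univ,
    true_and] at hb
  rcases hb with (⟨i, _, rfl⟩ | ⟨ij, hij, rfl⟩) | ⟨ij, hij, rfl⟩
  · exact Or.inl ⟨i, rfl⟩
  · exact Or.inr (Or.inl ⟨ij.1, ij.2, hij, rfl⟩)
  · exact Or.inr (Or.inr ⟨ij.1, ij.2, hij, rfl⟩)

lemma X_mem_allGoods {n : ℕ} (i : Fin n) : X i ∈ allGoods n := by
  classical
  simp only [allGoods, Finset.mem_union, Finset.mem_image, Finset.mem_filter, Finset.mem_univ,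
    true_and]
  exact Or.inl (Or.inl ⟨i, rfl⟩)

lemma add_mem_allGoods {n : ℕ} {i j : Fin n} (hij : i ≠ j) : X i + X j ∈ allGoods n := by
  classical
  simp only [allGoods, Finset.mem_union, Finset.mem_image, Finset.mem_filter, Finset.mem_univ,
    true_and]
  exact Or.inl (Or.inr ⟨(i, j), hij, rfl⟩)

lemma sub_mem_allGoods {n : ℕ} {i j : Fin n} (hij : i ≠ j) : X i - X j ∈ allGoods n := by
  classical
  simp only [allGoods, Finset.mem_union, Finset.mem_image, Finset.mem_filter, Finset.mem_univ,
    true_and]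
  exact Or.inr ⟨(i, j), hij, rfl⟩

lemma hyperplane_case {n : ℕ} {H : Set (Fin n → ℂ)} (h : IsAllowableHyperplane H) :
    H = Set.univ ∨ ∃ b ∈ allGoods n,
      H = {x : Fin n → ℂ | MvPolynomial.eval x (MvPolynomial.map (Int.castRingHom ℂ) b) = 0} := by
  rcases h with ⟨i, rfl⟩ | ⟨i, j, rfl⟩ | ⟨i, j, rfl⟩
  · exact Or.inr ⟨X i, X_mem_allGoods i, by simp⟩
  · by_cases hij : i = j
    · subst hij
      refine Or.inr ⟨X i, X_mem_allGoods i, ?_⟩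
      ext x
      simp [add_self_eq_zero]
    · exact Or.inr ⟨X i + X j, add_mem_allGoods hij, by simp⟩
  · by_cases hij : i = j
    · subst hij
      left
      ext x
      simp
    · exact Or.inr ⟨X i - X j, sub_mem_allGoods hij, by simp⟩

lemma map_int_injective {n : ℕ} :
    Function.Injective (MvPolynomial.map (Int.castRingHom ℂ) : MvPolynomial (Fin n) ℤ → _) :=
  MvPolynomial.map_injective _ Int.cast_injective

lemma descent {n : ℕ} (p : MvPolynomial (Fin n) ℤ) (hp : p ≠ 0) {c : ℂ} {k : ℕ}
    {f : Fin k → MvPolynomial (Fin n) ℤ} (hf : ∀ l, GoodBasic (f l))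
    (heq : MvPolynomial.map (Int.castRingHom ℂ) p
      = C c * ∏ l, MvPolynomial.map (Int.castRingHom ℂ) (f l)) :
    ∃ m : ℤ, m ≠ 0 ∧ p = C m * ∏ l, f l := by
  set F : MvPolynomial (Fin n) ℤ := ∏ l, f l with hF
  have hmapF : MvPolynomial.map (Int.castRingHom ℂ) F
      = ∏ l, MvPolynomial.map (Int.castRingHom ℂ) (f l) := by
    rw [hF, map_prod]
  rw [← hmapF] at heq
  have hFne : F ≠ 0 := by
    rw [hF]
    exact Finset.prod_ne_zero_iff.mpr fun l _ => (hf l).ne_zero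
  obtain ⟨d, hd⟩ := Finset.nonempty_iff_ne_empty.mpr
    (fun h => hFne (MvPolynomial.support_eq_empty.mp h))
  have ha : coeff d F ≠ 0 := MvPolynomial.mem_support_iff.mp hd
  set a : ℤ := coeff d F with haa
  set b : ℤ := coeff d p with hbb
  have hba : (b : ℂ) = c * a := by
    have := congrArg (coeff d) heq
    rw [coeff_map, coeff_C_mul, coeff_map] at this
    exact this
  set g : ℕ := Int.gcd a b with hg
  have hgpos : 0 < g := Int.gcd_pos_of_ne_zero_left b ha
  set a' : ℤ := a / g with ha'
  set b' : ℤ := b / g with hb'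
  have haa' : a = g * a' := (Int.mul_ediv_cancel' (Int.gcd_dvd_left a b)).symm
  have hbb' : b = g * b' := (Int.mul_ediv_cancel' (Int.gcd_dvd_right a b)).symm
  have ha'ne : a' ≠ 0 := by
    intro h0
    rw [h0, mul_zero] at haa'
    exact ha haa'
  have hcop : IsCoprime a' b' := by
    rw [Int.isCoprime_iff_gcd_eq_one, ha', hb', hg]
    exact Int.gcd_div_gcd_div_gcd hgpos
  have hkey : C a' * p = C b' * F := by
    apply map_int_injective
    rw [map_mul, map_mul, heq, map_C, map_C]
    have hb'c : (b' : ℂ) = c * a' := by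
      have hgne : (g : ℂ) ≠ 0 := Nat.cast_ne_zero.mpr hgpos.ne'
      have h3 : ((g * b' : ℤ) : ℂ) = c * ((g * a' : ℤ) : ℂ) := by
        rw [← hbb', ← haa']
        exact hba
      push_cast at h3
      have : (g : ℂ) * (b' : ℂ) = (g : ℂ) * (c * a') := by rw [h3]; ring
      exact mul_left_cancel₀ hgne this
    simp only [eq_intCast]
    rw [hb'c, C_mul]
    ring
  have hcoeffs : ∀ e, a' ∣ coeff e F := by
    intro e
    have h1 : a' * coeff e p = b' * coeff e F := by
      have := congrArg (coeff e) hkey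
      rwa [coeff_C_mul, coeff_C_mul] at this
    have h2 : a' ∣ b' * coeff e F := ⟨coeff e p, h1.symm⟩
    exact hcop.dvd_of_dvd_mul_left h2
  have hunit : a'.natAbs = 1 := by
    by_contra hne
    obtain ⟨v, hv, hvd⟩ := Nat.exists_prime_and_dvd hne
    haveI : Fact v.Prime := ⟨hv⟩
    have hvd' : (v : ℤ) ∣ a' := Int.dvd_natAbs.mp (Int.natCast_dvd_natCast.mpr hvd)
    have hzero : MvPolynomial.map (Int.castRingHom (ZMod v)) F = 0 := by
      apply MvPolynomial.ext
      intro e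
      rw [coeff_map, coeff_zero]
      have hdvd : (v : ℤ) ∣ coeff e F := hvd'.trans (hcoeffs e)
      exact_mod_cast (ZMod.intCast_zmod_eq_zero_iff_dvd _ v).mpr (by exact_mod_cast hdvd)
    rw [hF, map_prod] at hzero
    obtain ⟨l, _, hl⟩ := Finset.prod_eq_zero_iff.mp hzero
    exact (hf l).map_ne_zero hl
  have hb'ne : b' ≠ 0 := by
    intro h0
    rw [h0, C_0, zero_mul] at hkey
    have hp0 : p = 0 := by
      rcases mul_eq_zero.mp hkey with h | h
      · exact absurd (by simpa using h : a' = 0) ha'ne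
      · exact h
    exact hp hp0
  refine ⟨a' * b', mul_ne_zero ha'ne hb'ne, ?_⟩
  have hsq : a' * a' = 1 := by
    rcases Int.natAbs_eq_iff.mp hunit with h | h <;> rw [h] <;> ring
  calc p = C (a' * a') * p := by rw [hsq, C_1, one_mul]
    _ = C a' * (C a' * p) := by rw [C_mul]; ring
    _ = C a' * (C b' * F) := by rw [hkey]
    _ = C (a' * b') * F := by rw [C_mul]; ring

end Aux

/-- For a nonzero integer polynomial with zero constant term, viewed over `ℂⁿ`, the variety
is allowable iff the polynomial is a nonzero integer times a nonempty product of factors of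
the form `x i`, `x i + x j`, `x i - x j`. -/
theorem stmt5 {n : ℕ} (p : MvPolynomial (Fin n) ℤ) (hp : p ≠ 0)
    (hconst : MvPolynomial.coeff 0 p = 0) :
    IsAllowable {x : Fin n → ℂ |
        MvPolynomial.eval x (MvPolynomial.map (Int.castRingHom ℂ) p) = 0} ↔
    ∃ (m : ℤ) (k : ℕ) (f : Fin k → MvPolynomial (Fin n) ℤ),
      m ≠ 0 ∧ 1 ≤ k ∧ (∀ l : Fin k, IsBasicFactor (f l)) ∧
      p = MvPolynomial.C m * ∏ l : Fin k, f l := by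
  classical
  open MvPolynomial in
  constructor
  · rintro ⟨𝒢, h𝒢, hA⟩
    set pC : MvPolynomial (Fin n) ℂ := MvPolynomial.map (Int.castRingHom ℂ) p with hpCdef
    have hpC : pC ≠ 0 := fun h => hp (map_int_injective (by simpa [hpCdef] using h))
    set r : MvPolynomial (Fin n) ℂ :=
      ∏ b ∈ allGoods n, MvPolynomial.map (Int.castRingHom ℂ) b with hrdef
    have hclaim : ∀ x : Fin n → ℂ, eval x pC = 0 → eval x r = 0 := by
      intro x hx
      have hxV : x ∈ {x : Fin n → ℂ | eval x pC = 0} := hx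
      rw [hA] at hxV
      simp only [Set.mem_iUnion] at hxV
      obtain ⟨G, hG, hxG⟩ := hxV
      by_cases hall : ∀ Hh ∈ G, Hh = Set.univ
      · exfalso
        apply hpC
        apply MvPolynomial.funext
        intro y
        rw [map_zero]
        have hy : y ∈ ⋂₀ (G : Set (Set (Fin n → ℂ))) := by
          intro S hS
          rw [hall S (by exact_mod_cast hS)]
          trivial
        have : y ∈ {x : Fin n → ℂ | eval x pC = 0} := by
          rw [hA]
          exact Set.mem_iUnion.mpr ⟨G, Set.mem_iUnion.mpr ⟨hG, hy⟩⟩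
        exact this
      · push_neg at hall
        obtain ⟨Hh, hHhG, hHhne⟩ := hall
        rcases hyperplane_case ((h𝒢 G hG).2 Hh hHhG) with h | ⟨b, hbmem, hHb⟩
        · exact absurd h hHhne
        · have hxH : x ∈ Hh := hxG Hh hHhG
          rw [hHb] at hxH
          rw [hrdef, map_prod]
          exact Finset.prod_eq_zero hbmem hxH
    -- Nullstellensatz
    have hrad : r ∈ (Ideal.span {pC}).radical := by
      rw [← MvPolynomial.vanishingIdeal_zeroLocus_eq_radical (K := ℂ),
        MvPolynomial.mem_vanishingIdeal_iff]
      intro x hx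
      exact hclaim x ((MvPolynomial.mem_zeroLocus_iff.mp hx) pC (Ideal.subset_span rfl))
    obtain ⟨K, hK⟩ := hrad
    have hdvd : pC ∣ r ^ K := (Ideal.mem_span_singleton).mp hK
    obtain ⟨c, k, f, hc, hf, heq⟩ :=
      factor_structure (allGoods n) (fun b hb => mem_allGoods hb) K pC (by rwa [hrdef] at hdvd)
    obtain ⟨m, hm, hpeq⟩ := descent p hp hf (by rw [← hpCdef]; exact heq)
    have hk : 1 ≤ k := by
      rcases Nat.eq_zero_or_pos k with h0 | h1
      · exfalso
        subst h0
        rw [Finset.univ_eq_empty, Finset.prod_empty, mul_one] at hpeq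
        rw [hpeq, MvPolynomial.coeff_zero_C] at hconst
        exact hm hconst
      · exact h1
    exact ⟨m, k, f, hm, hk, fun l => (hf l).isBasicFactor, hpeq⟩
  · rintro ⟨m, k, f, hm, hk, hf, hpeq⟩
    set H : Fin k → Set (Fin n → ℂ) :=
      fun l => {x | MvPolynomial.eval x (MvPolynomial.map (Int.castRingHom ℂ) (f l)) = 0}
      with hH
    refine ⟨Finset.univ.image fun l => ({H l} : Finset (Set (Fin n → ℂ))), ?_, ?_⟩
    · intro G hG
      obtain ⟨l, _, rfl⟩ := Finset.mem_image.mp hG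
      refine ⟨⟨H l, Finset.mem_singleton_self _⟩, ?_⟩
      intro S hS
      rw [Finset.mem_singleton] at hS
      subst hS
      rcases hf l with ⟨i, hfl⟩ | ⟨i, j, hfl⟩ | ⟨i, j, hfl⟩
      · exact Or.inl ⟨i, by rw [hH]; simp [hfl]⟩
      · exact Or.inr (Or.inl ⟨i, j, by rw [hH]; simp [hfl]⟩)
      · exact Or.inr (Or.inr ⟨i, j, by rw [hH]; simp [hfl]⟩)
    · ext x
      simp only [Set.mem_setOf_eq, Set.mem_iUnion, Finset.mem_image, Finset.mem_univ, true_and,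
        exists_exists_eq_and]
      rw [hpeq]
      rw [map_mul, map_C, map_prod]
      simp only [map_mul, eval_C, map_prod, eq_intCast]
      rw [mul_eq_zero]
      constructor
      · rintro (h | h)
        · exact absurd (by exact_mod_cast h) hm
        · obtain ⟨l, _, hl⟩ := Finset.prod_eq_zero_iff.mp h
          refine ⟨{H l}, ⟨l, rfl⟩, ?_⟩
          rw [Finset.coe_singleton, Set.sInter_singleton, hH]
          exact hl
      · rintro ⟨G, ⟨l, rfl⟩, hxl⟩
        right
        rw [Finset.coe_singleton, Set.sInter_singleton, hH] at hxl
        exact Finset.prod_eq_zero (Finset.mem_univ l) hxl
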